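/- Let a ∈ ℝ and b ∈ (a, ∞]. Let θ_1, θ_2 : [a,b) → ℝ be continuous with θ_1(x) ≥ θ_2(x) ≥ 0 for all x ∈ [a,b), and let φ_1, φ_2 : [a,b) → ℝ be C² functions with φ_i'' = θ_i·φ_i on [a,b) for i = 1,2 and φ_2 ≥ 0 on [a,b). Assume φ_1(a) = φ_2(a), that the limits of φ_1(x) and φ_2(x) as x → b⁻ (as x → ∞ if b = ∞) both exist, are equal, and are nonnegative. Then φ_2(x) ≥ φ_1(x) for all x ∈ [a,b). -/

import Mathlib

open Filter Topology

/-- Auxiliary comparison lemma: a function `ψ` on a convex set `I` with left endpoint `a`,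
nonpositive at `a`, with nonnegative second derivative wherever it is positive, and tending
to `0` along a suitable filter at the right end, is nonpositive on `I`. -/
lemma sturmLiouville_comparison_aux (a : ℝ) (I : Set ℝ)
    (hIu : UniqueDiffOn ℝ I) (hIconv : Convex ℝ I)
    (haI : a ∈ I) (hIa : ∀ x ∈ I, a ≤ x)
    (hIoo : ∀ β ∈ I, Set.Ioo a β ⊆ interior I)
    (ψ : ℝ → ℝ) (hψ : ContDiffOn ℝ 2 ψ I)
    (hψ'' : ∀ x ∈ I, 0 < ψ x → 0 ≤ derivWithin (derivWithin ψ I) I x)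
    (hψa : ψ a ≤ 0)
    (F : Filter ℝ) [hne : F.NeBot]
    (hψF : Tendsto ψ F (𝓝 0))
    (hFev : ∀ x₀ ∈ I, ∀ᶠ x in F, x ∈ I ∧ x₀ ≤ x) :
    ∀ x ∈ I, ψ x ≤ 0 := by
  open Set in
  intro x₀ hx₀
  by_contra h
  push_neg at h
  have hcont : ContinuousOn ψ I := hψ.continuousOn
  have hax₀ : a ≤ x₀ := hIa x₀ hx₀
  have hIccI : Icc a x₀ ⊆ I := hIconv.ordConnected.out haI hx₀
  have hTclosed : IsClosed (Icc a x₀ ∩ ψ ⁻¹' Iic 0) :=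
    (hcont.mono hIccI).preimage_isClosed_of_isClosed isClosed_Icc isClosed_Iic
  have hTcompact : IsCompact (Icc a x₀ ∩ ψ ⁻¹' Iic 0) :=
    isCompact_Icc.of_isClosed_subset hTclosed inter_subset_left
  have hTne : a ∈ Icc a x₀ ∩ ψ ⁻¹' Iic 0 := ⟨⟨le_rfl, hax₀⟩, hψa⟩
  obtain ⟨hαT1, (hψα : ψ (sSup (Icc a x₀ ∩ ψ ⁻¹' Iic 0)) ≤ 0)⟩ :=
    hTcompact.sSup_mem ⟨a, hTne⟩
  set α := sSup (Icc a x₀ ∩ ψ ⁻¹' Iic 0) with hαdef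
  have hαI : α ∈ I := hIccI hαT1
  have haα : a ≤ α := hαT1.1
  have hαx₀ : α < x₀ :=
    lt_of_le_of_ne hαT1.2 (fun heq => absurd (heq ▸ hψα) (not_le.2 h))
  have hpos₁ : ∀ x ∈ Ioc α x₀, 0 < ψ x := by
    intro x hx
    by_contra hxneg
    push_neg at hxneg
    have hxT : x ∈ Icc a x₀ ∩ ψ ⁻¹' Iic 0 := ⟨⟨haα.trans hx.1.le, hx.2⟩, hxneg⟩
    exact absurd (le_csSup hTcompact.bddAbove hxT) (not_le.2 hx.1)
  -- key convexity step
  have key : ∀ β, x₀ ≤ β → β ∈ I → (∀ x ∈ Ioo α β, 0 < ψ x) →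
      ψ x₀ ≤ max (ψ α) (ψ β) := by
    intro β hx₀β hβI hposβ
    have hαβ : α < β := lt_of_lt_of_le hαx₀ hx₀β
    have hIccβ : Icc α β ⊆ I := hIconv.ordConnected.out hαI hβI
    have hintβ : Ioo α β ⊆ interior I :=
      (Ioo_subset_Ioo_left haα).trans (hIoo β hβI)
    have hd1 : ContDiffOn ℝ 1 (derivWithin ψ I) I :=
      hψ.derivWithin hIu (by norm_num)
    have hdiff1 : DifferentiableOn ℝ ψ (interior (Icc α β)) := by
      rw [interior_Icc]
      intro x hx
      have hmem : I ∈ 𝓝 x := mem_interior_iff_mem_nhds.1 (hintβ hx)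
      exact (((hψ.differentiableOn (by norm_num)) x
        (hIccβ (Ioo_subset_Icc_self hx))).differentiableAt hmem).differentiableWithinAt
    have hEv : ∀ x ∈ Ioo α β, deriv ψ =ᶠ[𝓝 x] derivWithin ψ I := by
      intro x hx
      filter_upwards [isOpen_interior.mem_nhds (hintβ hx)] with y hy
      exact (derivWithin_of_mem_nhds (mem_interior_iff_mem_nhds.1 hy)).symm
    have hdiff2 : DifferentiableOn ℝ (deriv ψ) (interior (Icc α β)) := by
      rw [interior_Icc]
      intro x hx
      have hmem : I ∈ 𝓝 x := mem_interior_iff_mem_nhds.1 (hintβ hx)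
      have h1 : DifferentiableAt ℝ (derivWithin ψ I) x :=
        ((hd1.differentiableOn one_ne_zero) x (hIccβ (Ioo_subset_Icc_self hx))).differentiableAt hmem
      exact ((hEv x hx).differentiableAt_iff.2 h1).differentiableWithinAt
    have hdd : ∀ x ∈ interior (Icc α β), 0 ≤ deriv^[2] ψ x := by
      rw [interior_Icc]
      intro x hx
      have hxI : x ∈ I := hIccβ (Ioo_subset_Icc_self hx)
      have hmem : I ∈ 𝓝 x := mem_interior_iff_mem_nhds.1 (hintβ hx)
      have heq : deriv^[2] ψ x = derivWithin (derivWithin ψ I) I x := by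
        show deriv (deriv ψ) x = _
        rw [(hEv x hx).deriv_eq, derivWithin_of_mem_nhds hmem]
      rw [heq]
      exact hψ'' x hxI (hposβ x hx)
    have hconv : ConvexOn ℝ (Icc α β) ψ :=
      convexOn_of_deriv2_nonneg (convex_Icc α β) (hcont.mono hIccβ) hdiff1 hdiff2 hdd
    exact hconv.le_on_segment (left_mem_Icc.2 hαβ.le) (right_mem_Icc.2 hαβ.le)
      (by rw [segment_eq_Icc hαβ.le]; exact ⟨hαx₀.le, hx₀β⟩)
  by_cases hcase : ∃ β ∈ I, x₀ < β ∧ ψ β ≤ 0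
  · obtain ⟨β₀, hβ₀I, hx₀β₀, hψβ₀⟩ := hcase
    have hIccU : Icc x₀ β₀ ⊆ I := hIconv.ordConnected.out hx₀ hβ₀I
    have hUclosed : IsClosed (Icc x₀ β₀ ∩ ψ ⁻¹' Iic 0) :=
      (hcont.mono hIccU).preimage_isClosed_of_isClosed isClosed_Icc isClosed_Iic
    have hUcompact : IsCompact (Icc x₀ β₀ ∩ ψ ⁻¹' Iic 0) :=
      isCompact_Icc.of_isClosed_subset hUclosed inter_subset_left
    have hUne : β₀ ∈ Icc x₀ β₀ ∩ ψ ⁻¹' Iic 0 := ⟨⟨hx₀β₀.le, le_rfl⟩, hψβ₀⟩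
    obtain ⟨hβU1, (hψβ : ψ (sInf (Icc x₀ β₀ ∩ ψ ⁻¹' Iic 0)) ≤ 0)⟩ :=
      hUcompact.sInf_mem ⟨β₀, hUne⟩
    set β := sInf (Icc x₀ β₀ ∩ ψ ⁻¹' Iic 0) with hβdef
    have hβI : β ∈ I := hIccU hβU1
    have hx₀β : x₀ ≤ β := hβU1.1
    have hpos₂ : ∀ x ∈ Ioo α β, 0 < ψ x := by
      intro x hx
      rcases le_or_gt x x₀ with hle | hlt
      · exact hpos₁ x ⟨hx.1, hle⟩
      · by_contra hxneg
        push_neg at hxneg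
        have hxU : x ∈ Icc x₀ β₀ ∩ ψ ⁻¹' Iic 0 := ⟨⟨hlt.le, hx.2.le.trans hβU1.2⟩, hxneg⟩
        exact absurd (csInf_le hUcompact.bddBelow hxU) (not_le.2 hx.2)
    have hle := key β hx₀β hβI hpos₂
    exact absurd (hle.trans (max_le hψα hψβ)) (not_le.2 h)
  · push_neg at hcase
    have hmono : ∀ x ∈ I, x₀ ≤ x → ψ x₀ ≤ ψ x := by
      intro x hxI hx₀x
      rcases eq_or_lt_of_le hx₀x with rfl | hlt
      · exact le_rfl
      have hpos₂ : ∀ y ∈ Ioo α x, 0 < ψ y := by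
        intro y hy
        rcases le_or_gt y x₀ with hle | hlt'
        · exact hpos₁ y ⟨hy.1, hle⟩
        · have hyI : y ∈ I := hIconv.ordConnected.out hαI hxI ⟨hy.1.le, hy.2.le⟩
          exact hcase y hyI hlt'
      have hle := key x hlt.le hxI hpos₂
      rcases max_cases (ψ α) (ψ x) with ⟨heq, _⟩ | ⟨heq, _⟩
      · rw [heq] at hle; exact absurd (hle.trans hψα) (not_le.2 h)
      · rw [heq] at hle; exact hle
    have hev : ∀ᶠ x in F, ψ x₀ ≤ ψ x := by
      filter_upwards [hFev x₀ hx₀] with x hx using hmono x hx.1 hx.2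
    exact absurd (ge_of_tendsto hψF hev) (not_le.2 h)

/-- Comparison lemma for Sturm–Liouville equations on `[a,b)` (with `b ∈ (a,∞]`,
encoded as `b : EReal`): if `θ₁ ≥ θ₂ ≥ 0`, `φᵢ'' = θᵢφᵢ`, `φ₂ ≥ 0`, `φ₁(a) = φ₂(a)`,
and `φ₁, φ₂` have the same nonnegative limit at `b⁻`, then `φ₂ ≥ φ₁` on `[a,b)`. -/
theorem sturmLiouville_comparison
    (a : ℝ) (b : EReal) (hab : (a : EReal) < b)
    (I : Set ℝ) (hI : I = {x : ℝ | a ≤ x ∧ (x : EReal) < b})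
    (θ₁ θ₂ φ₁ φ₂ : ℝ → ℝ)
    (hθ₁c : ContinuousOn θ₁ I) (hθ₂c : ContinuousOn θ₂ I)
    (hθle : ∀ x ∈ I, θ₂ x ≤ θ₁ x) (hθ₂pos : ∀ x ∈ I, 0 ≤ θ₂ x)
    (hφ₁ : ContDiffOn ℝ 2 φ₁ I) (hφ₂ : ContDiffOn ℝ 2 φ₂ I)
    (hode₁ : ∀ x ∈ I, derivWithin (derivWithin φ₁ I) I x = θ₁ x * φ₁ x)
    (hode₂ : ∀ x ∈ I, derivWithin (derivWithin φ₂ I) I x = θ₂ x * φ₂ x)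
    (hφ₂pos : ∀ x ∈ I, 0 ≤ φ₂ x)
    (ha : φ₁ a = φ₂ a)
    (hb : ∃ l : ℝ, 0 ≤ l ∧
      Tendsto φ₁ (Filter.comap (fun x : ℝ => (x : EReal)) (𝓝[<] b)) (𝓝 l) ∧
      Tendsto φ₂ (Filter.comap (fun x : ℝ => (x : EReal)) (𝓝[<] b)) (𝓝 l)) :
    ∀ x ∈ I, φ₁ x ≤ φ₂ x := by
  obtain ⟨l, hl0, hb₁, hb₂⟩ := hb
  -- structural facts about `I` and a real filter at the right endpoint
  have hpack : (UniqueDiffOn ℝ I ∧ Convex ℝ I ∧ a ∈ I ∧ (∀ x ∈ I, a ≤ x) ∧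
      (∀ β ∈ I, Set.Ioo a β ⊆ interior I)) ∧
      ∃ F : Filter ℝ, F.NeBot ∧
        F ≤ Filter.comap (fun x : ℝ => (x : EReal)) (𝓝[<] b) ∧
        (∀ x₀ ∈ I, ∀ᶠ x in F, x ∈ I ∧ x₀ ≤ x) := by
    clear hb₁ hb₂
    induction b with
    | bot => exact absurd hab (by simp)
    | coe b' =>
      have hab' : a < b' := by exact_mod_cast hab
      have hIeq : I = Set.Ico a b' := by
        rw [hI]; ext x; simp [Set.mem_Ico, EReal.coe_lt_coe_iff]
      constructor
      · refine ⟨?_, ?_, ?_, ?_, ?_⟩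
        · rw [hIeq]; exact uniqueDiffOn_Ico a b'
        · rw [hIeq]; exact convex_Ico a b'
        · rw [hIeq]; exact ⟨le_rfl, hab'⟩
        · rw [hIeq]; exact fun x hx => hx.1
        · rw [hIeq]; intro β hβ
          rw [interior_Ico]
          exact Set.Ioo_subset_Ioo le_rfl hβ.2.le
      · refine ⟨𝓝[<] b', nhdsLT_neBot b', ?_, ?_⟩
        · refine Filter.tendsto_iff_comap.mp ?_
          refine tendsto_nhdsWithin_of_tendsto_nhds_of_eventually_within _
            ((continuous_coe_real_ereal.tendsto b').mono_left nhdsWithin_le_nhds) ?_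
          filter_upwards [self_mem_nhdsWithin] with x hx
          exact EReal.coe_lt_coe_iff.2 hx
        · intro x₀ hx₀
          rw [hIeq] at hx₀ ⊢
          filter_upwards [Ioo_mem_nhdsLT hx₀.2] with x hx
          exact ⟨⟨hx₀.1.trans hx.1.le, hx.2⟩, hx.1.le⟩
    | top =>
      have hIeq : I = Set.Ici a := by
        rw [hI]; ext x; simp [EReal.coe_lt_top]
      constructor
      · refine ⟨?_, ?_, ?_, ?_, ?_⟩
        · rw [hIeq]; exact uniqueDiffOn_Ici a
        · rw [hIeq]; exact convex_Ici a
        · rw [hIeq]; exact Set.self_mem_Ici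
        · rw [hIeq]; exact fun x hx => hx
        · rw [hIeq]; intro β hβ
          rw [interior_Ici]
          exact fun x hx => hx.1
      · refine ⟨atTop, atTop_neBot, ?_, ?_⟩
        · refine Filter.tendsto_iff_comap.mp ?_
          refine tendsto_nhdsWithin_of_tendsto_nhds_of_eventually_within _ ?_
            (Eventually.of_forall fun x => EReal.coe_lt_top x)
          rw [EReal.tendsto_nhds_top_iff_real]
          intro x
          filter_upwards [eventually_gt_atTop x] with y hy
          exact_mod_cast hy
        · intro x₀ hx₀
          rw [hIeq] at hx₀ ⊢
          filter_upwards [eventually_ge_atTop x₀] with x hx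
          exact ⟨hx₀.trans hx, hx⟩
  obtain ⟨⟨hIu, hIconv, haI, hIa, hIoo⟩, F, hFne, hFle, hFev⟩ := hpack
  haveI := hFne
  set ψ : ℝ → ℝ := fun x => φ₁ x - φ₂ x with hψdef
  have hψ : ContDiffOn ℝ 2 ψ I := hφ₁.sub hφ₂
  have hd₁ : DifferentiableOn ℝ φ₁ I := hφ₁.differentiableOn (by norm_num)
  have hd₂ : DifferentiableOn ℝ φ₂ I := hφ₂.differentiableOn (by norm_num)
  have hdd₁ : DifferentiableOn ℝ (derivWithin φ₁ I) I :=
    (hφ₁.derivWithin hIu (m := 1) (by norm_num)).differentiableOn one_ne_zero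
  have hdd₂ : DifferentiableOn ℝ (derivWithin φ₂ I) I :=
    (hφ₂.derivWithin hIu (m := 1) (by norm_num)).differentiableOn one_ne_zero
  have hsub : Set.EqOn (derivWithin ψ I)
      (fun y => derivWithin φ₁ I y - derivWithin φ₂ I y) I :=
    fun y hy => derivWithin_sub (hd₁ y hy) (hd₂ y hy)
  have hψeq : ∀ x ∈ I, derivWithin (derivWithin ψ I) I x = θ₁ x * φ₁ x - θ₂ x * φ₂ x := by
    intro x hx
    have h1 : derivWithin (derivWithin ψ I) I x
        = derivWithin (fun y => derivWithin φ₁ I y - derivWithin φ₂ I y) I x :=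
      derivWithin_congr hsub (hsub hx)
    rw [h1, derivWithin_fun_sub (hdd₁ x hx) (hdd₂ x hx), hode₁ x hx, hode₂ x hx]
  have hψ'' : ∀ x ∈ I, 0 < ψ x → 0 ≤ derivWithin (derivWithin ψ I) I x := by
    intro x hx hpos
    rw [hψeq x hx]
    have h1 := hφ₂pos x hx
    have h2 := hθle x hx
    have h3 := hθ₂pos x hx
    have h4 : 0 < φ₁ x - φ₂ x := hpos
    nlinarith
  have hψa : ψ a ≤ 0 := by simp [hψdef, ha]
  have hψF : Tendsto ψ F (𝓝 0) := by
    have := (hb₁.sub hb₂).mono_left hFle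
    rwa [sub_self] at this
  have := sturmLiouville_comparison_aux a I hIu hIconv haI hIa hIoo ψ hψ hψ'' hψa F hψF hFev
  intro x hx
  have := this x hx
  simpa [hψdef, sub_nonpos] using this
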